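/- For every feasible fractional solution (x^f_c, x̄^f_c)_{c∈C,f∈F} to (LP-FL)—nonnegative reals with ∑_{f∈F}(x^f_c + x̄^f_c) ≥ 1 for every c ∈ C—there exists an integral feasible solution (z^f_c, z̄^f_c) with values in {0,1} and ∑_{f∈F}(z^f_c + z̄^f_c) ≥ 1 for every c ∈ C, whose (LP-FL) objective value is at most 4 times that of (x, x̄): ∑_{f∈F} o(f)·max_{c∈C} z^f_c + ∑_{f∈F} o(f) ∑_{c∈C} p_c·z̄^f_c + ∑_{c∈C} ∑_{f∈F} p_c·d(c,f)·(z^f_c + z̄^f_c) ≤ 4·( ∑_{f∈F} o(f)·max_{c∈C} x^f_c + ∑_{f∈F} o(f) ∑_{c∈C} p_c·x̄^f_c + ∑_{c∈C} ∑_{f∈F} p_c·d(c,f)·(x^f_c + x̄^f_c) ). -/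

import Mathlib

open Finset


lemma clusterFL {C F : Type*} [DecidableEq C] [DecidableEq F] (r : C → ℝ) (ball : C → Finset F) :
    ∀ A : Finset C, (∀ c ∈ A, (ball c).Nonempty) →
    ∃ (S : Finset C) (τ : C → C), S ⊆ A ∧
      (∀ c ∈ A, τ c ∈ S ∧ r (τ c) ≤ r c ∧ (ball (τ c) ∩ ball c).Nonempty) ∧
      (S : Set C).PairwiseDisjoint ball := by
  classical
  intro A
  induction A using Finset.strongInduction with
  | _ A ih =>
    intro hne
    rcases A.eq_empty_or_nonempty with rfl | hA
    · exact ⟨∅, id, by simp, by simp, by simp⟩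
    · obtain ⟨c₀, hc₀A, hc₀min⟩ := Finset.exists_min_image A r hA
      set N := A.filter (fun c => (ball c₀ ∩ ball c).Nonempty) with hN
      have hc₀N : c₀ ∈ N := by
        refine mem_filter.2 ⟨hc₀A, ?_⟩
        rw [inter_self]
        exact hne c₀ hc₀A
      have hNA : N ⊆ A := filter_subset _ _
      have hss : A \ N ⊂ A := by
        refine Finset.sdiff_ssubset hNA ⟨c₀, hc₀N⟩
      obtain ⟨S', τ', hS'A, hτ', hdisj⟩ := ih (A \ N) hss
        (fun c hc => hne c (mem_sdiff.1 hc).1)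
      refine ⟨insert c₀ S', fun c => if c ∈ N then c₀ else τ' c, ?_, ?_, ?_⟩
      · intro t ht
        rcases mem_insert.1 ht with rfl | ht'
        · exact hc₀A
        · exact (mem_sdiff.1 (hS'A ht')).1
      · intro c hc
        by_cases hcN : c ∈ N
        · simp only [if_pos hcN]
          exact ⟨mem_insert_self _ _, hc₀min c hc, (mem_filter.1 hcN).2⟩
        · simp only [if_neg hcN]
          obtain ⟨h1, h2, h3⟩ := hτ' c (mem_sdiff.2 ⟨hc, hcN⟩)
          exact ⟨mem_insert_of_mem h1, h2, h3⟩
      · rw [coe_insert]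
        refine hdisj.insert ?_
        intro t htS' _
        have htA : t ∈ A \ N := hS'A htS'
        have hnon : ¬ (ball c₀ ∩ ball t).Nonempty := fun h =>
          (mem_sdiff.1 htA).2 (mem_filter.2 ⟨(mem_sdiff.1 htA).1, h⟩)
        rw [Finset.disjoint_left]
        intro a ha₀ hat
        exact hnon ⟨a, mem_inter.2 ⟨ha₀, hat⟩⟩

private lemma sum_image_le_real {α β : Type*} [DecidableEq β] (S : Finset α) (f : α → β)
    (g : β → ℝ) (hg : ∀ b, 0 ≤ g b) : ∑ b ∈ S.image f, g b ≤ ∑ a ∈ S, g (f a) := by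
  classical
  induction S using Finset.induction_on with
  | empty => simp
  | insert a s ha ih =>
      rw [Finset.image_insert, Finset.sum_insert ha]
      by_cases hm : f a ∈ s.image f
      · rw [Finset.insert_eq_self.2 hm]
        have := hg (f a)
        linarith
      · rw [Finset.sum_insert hm]
        linarith


lemma dichotomyFL {F : Type*} [Fintype F] (w b D oo : F → ℝ)
    (hw : ∀ f, 0 ≤ w f) (hb : ∀ f, 0 ≤ b f) (hD : ∀ f, 0 ≤ D f) (hoo : ∀ f, 0 ≤ oo f)
    (hfeas : 1 ≤ ∑ f, (w f + b f)) (g : F) (hg : ∀ f, oo g + D g ≤ oo f + D f) :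
    (∃ r, 0 ≤ r ∧ 1/4 ≤ ∑ f ∈ univ.filter (fun f => D f ≤ r), w f ∧
      3 * r ≤ 4 * ∑ f, D f * w f + 4/3 * ∑ f, (oo f + D f) * b f) ∨
    (oo g + D g ≤ 4 * ∑ f, D f * w f + 4/3 * ∑ f, (oo f + D f) * b f) := by
  classical
  by_contra hcon
  push_neg at hcon
  obtain ⟨hA, hB⟩ := hcon
  set R := ∑ f, D f * w f with hRdef
  set XB := ∑ f, (oo f + D f) * b f with hXBdef
  set K := 4 * R + 4/3 * XB with hKdef
  set s := ∑ f, w f with hsdef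
  set sb := ∑ f, b f with hsbdef
  clear_value K
  have hs0 : 0 ≤ s := sum_nonneg fun f _ => hw f
  have hsb0 : 0 ≤ sb := sum_nonneg fun f _ => hb f
  have hR0 : 0 ≤ R := sum_nonneg fun f _ => mul_nonneg (hD f) (hw f)
  have hXB0 : 0 ≤ XB := sum_nonneg fun f _ =>
    mul_nonneg (add_nonneg (hoo f) (hD f)) (hb f)
  have hK0 : 0 ≤ K := by rw [hKdef]; linarith
  have hssb : 1 ≤ s + sb := by
    rw [hsdef, hsbdef, ← sum_add_distrib]; exact hfeas
  -- XB lower bounds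
  have hXBlb : K * sb ≤ XB := by
    calc K * sb = ∑ f, K * b f := by rw [hsbdef, mul_sum]
    _ ≤ ∑ f, (oo f + D f) * b f := by
        refine sum_le_sum fun f _ => mul_le_mul_of_nonneg_right ?_ (hb f)
        exact le_trans (le_of_lt hB) (hg f)
    _ = XB := rfl
  have hXBstrict : 0 < sb → K * sb < XB := by
    intro hpos
    have h1 : K * sb < (oo g + D g) * sb := by
      exact mul_lt_mul_of_pos_right hB hpos
    refine lt_of_lt_of_le h1 ?_
    calc (oo g + D g) * sb = ∑ f, (oo g + D g) * b f := by rw [hsbdef, mul_sum]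
    _ ≤ ∑ f, (oo f + D f) * b f :=
        sum_le_sum fun f _ => mul_le_mul_of_nonneg_right (hg f) (hb f)
  by_cases hs : s < 1/4
  · have hsb34 : 3/4 ≤ sb := by linarith
    have hstep := hXBstrict (by linarith)
    nlinarith [mul_nonneg hK0 hsb0]
  · push_neg at hs
    -- mass function
    have hMfull : ∀ fm : F, (∀ f, D f ≤ D fm) →
        (∑ f ∈ univ.filter (fun f => D f ≤ D fm), w f) = s := by
      intro fm hfm
      rw [hsdef]
      congr 1
      rw [Finset.filter_true_of_mem]
      intro f _; exact hfm f
    have hFne : Nonempty F := ⟨g⟩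
    obtain ⟨fm, _, hfm⟩ := Finset.exists_max_image univ D univ_nonempty
    have hfm' : ∀ f, D f ≤ D fm := fun f => hfm f (mem_univ f)
    set G := univ.filter (fun f => 1/4 ≤ ∑ f' ∈ univ.filter (fun f' => D f' ≤ D f), w f') with hGdef
    have hGne : G.Nonempty := by
      refine ⟨fm, mem_filter.2 ⟨mem_univ _, ?_⟩⟩
      rw [hMfull fm hfm']; exact hs
    obtain ⟨f₀, hf₀G, hf₀min⟩ := Finset.exists_min_image G D hGne
    set ρ := D f₀ with hρdef
    have hmassρ : 1/4 ≤ ∑ f ∈ univ.filter (fun f => D f ≤ ρ), w f :=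
      (mem_filter.1 hf₀G).2
    have hρ0 : 0 ≤ ρ := hD f₀
    have hKρ : K < 3 * ρ := hA ρ hρ0 hmassρ
    have hρpos : 0 < ρ := by nlinarith
    -- mass strictly inside is ≤ 1/4
    set E := univ.filter (fun f => D f < ρ) with hEdef
    have hMlt : ∑ f ∈ E, w f ≤ 1/4 := by
      rcases E.eq_empty_or_nonempty with h | h
      · norm_num [h]
      · obtain ⟨f₁, hf₁E, hmax⟩ := Finset.exists_max_image E D h
        have hf₁lt : D f₁ < ρ := (mem_filter.1 hf₁E).2
        have hsub : E ⊆ univ.filter (fun f => D f ≤ D f₁) := by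
          intro f hf
          exact mem_filter.2 ⟨mem_univ f, hmax f hf⟩
        have h1 : ∑ f ∈ E, w f ≤ ∑ f ∈ univ.filter (fun f => D f ≤ D f₁), w f :=
          sum_le_sum_of_subset_of_nonneg hsub fun f _ _ => hw f
        have h2 : ∑ f ∈ univ.filter (fun f => D f ≤ D f₁), w f < 1/4 := by
          by_contra hcon2
          push_neg at hcon2
          have : f₁ ∈ G := mem_filter.2 ⟨mem_univ _, hcon2⟩
          have := hf₀min f₁ this
          linarith
        linarith
    -- R ≥ ρ * (s - Mlt)
    have hRlb : ρ * (s - ∑ f ∈ E, w f) ≤ R := by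
      have hsplit : s = ∑ f ∈ E, w f + ∑ f ∈ univ.filter (fun f => ¬ D f < ρ), w f := by
        rw [hsdef, ← sum_filter_add_sum_filter_not univ (fun f => D f < ρ) w]
      have h1 : ρ * ∑ f ∈ univ.filter (fun f => ¬ D f < ρ), w f
          ≤ ∑ f ∈ univ.filter (fun f => ¬ D f < ρ), D f * w f := by
        rw [mul_sum]
        refine sum_le_sum fun f hf => ?_
        have : ¬ D f < ρ := (mem_filter.1 hf).2
        exact mul_le_mul_of_nonneg_right (not_lt.1 this) (hw f)
      have h2 : ∑ f ∈ univ.filter (fun f => ¬ D f < ρ), D f * w f ≤ R := by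
        rw [hRdef]
        exact sum_le_sum_of_subset_of_nonneg (filter_subset _ _)
          fun f _ _ => mul_nonneg (hD f) (hw f)
      have h3 : s - ∑ f ∈ E, w f = ∑ f ∈ univ.filter (fun f => ¬ D f < ρ), w f := by
        rw [hsplit]; ring
      rw [h3]; linarith
    by_cases hs1 : 1 ≤ s
    · nlinarith [hRlb, hXB0, hKρ,
        mul_nonneg hρ0 (by linarith : (0:ℝ) ≤ 1/4 - ∑ f ∈ E, w f),
        mul_nonneg hρ0 (by linarith : (0:ℝ) ≤ s - 1)]
    · push_neg at hs1
      have hsbpos : 0 < sb := by linarith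
      have hXBs := hXBstrict hsbpos
      have hsb1s : 1 - s ≤ sb := by linarith
      have hfact1 : K * (1 - s) ≤ K * sb := mul_le_mul_of_nonneg_left hsb1s hK0
      have hfact2 : 0 ≤ (3*ρ - K) * (4*s - 1) :=
        mul_nonneg (by linarith) (by linarith)
      nlinarith [hRlb, hXBs, hfact1, hfact2, hKρ, hs,
        mul_nonneg hρ0 (by linarith : (0:ℝ) ≤ 1/4 - ∑ f ∈ E, w f)]

open Finset

theorem stmt14 {C F V : Type*} [Fintype C] [Fintype F] [Nonempty C] [MetricSpace V]
    (cl : C → V) (fa : F → V)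
    (o : F → ℝ) (ho : ∀ f, 0 ≤ o f)
    (p : C → ℝ) (hp0 : ∀ c, 0 ≤ p c) (hp1 : ∀ c, p c ≤ 1)
    (x xb : C → F → ℝ) (hx : ∀ c f, 0 ≤ x c f) (hxb : ∀ c f, 0 ≤ xb c f)
    (hfeas : ∀ c : C, 1 ≤ ∑ f : F, (x c f + xb c f)) :
    ∃ z zb : C → F → ℝ,
      (∀ c f, z c f = 0 ∨ z c f = 1) ∧ (∀ c f, zb c f = 0 ∨ zb c f = 1) ∧
      (∀ c : C, 1 ≤ ∑ f : F, (z c f + zb c f)) ∧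
      ∑ f : F, o f * (Finset.univ.sup' Finset.univ_nonempty fun c : C => z c f) +
          ∑ f : F, o f * ∑ c : C, p c * zb c f +
          ∑ c : C, ∑ f : F, p c * dist (cl c) (fa f) * (z c f + zb c f) ≤
        4 * (∑ f : F, o f * (Finset.univ.sup' Finset.univ_nonempty fun c : C => x c f) +
          ∑ f : F, o f * ∑ c : C, p c * xb c f +
          ∑ c : C, ∑ f : F, p c * dist (cl c) (fa f) * (x c f + xb c f)) := by
  classical
  have hF : Nonempty F := by
    by_contra h
    rw [not_nonempty_iff] at h
    have h1 := hfeas (Classical.arbitrary C)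
    rw [Finset.univ_eq_empty, Finset.sum_empty] at h1
    linarith
  -- rent facility: cheapest (opening + connection)
  have hgex : ∀ c : C, ∃ gf : F, ∀ f : F,
      o gf + dist (cl c) (fa gf) ≤ o f + dist (cl c) (fa f) := by
    intro c
    obtain ⟨gf, _, hmin⟩ := Finset.exists_min_image univ
      (fun f => o f + dist (cl c) (fa f)) univ_nonempty
    exact ⟨gf, fun f => hmin f (mem_univ f)⟩
  choose g hgspec using hgex
  set Kq : C → ℝ := fun c => 4 * ∑ f, dist (cl c) (fa f) * x c f
      + 4/3 * ∑ f, (o f + dist (cl c) (fa f)) * xb c f with hKqdef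
  set P : C → Prop := fun c => ∃ r, 0 ≤ r ∧
      1/4 ≤ ∑ f ∈ univ.filter (fun f => dist (cl c) (fa f) ≤ r), x c f ∧
      3 * r ≤ Kq c with hPdef
  have hdich : ∀ c : C, P c ∨ (o (g c) + dist (cl c) (fa (g c)) ≤ Kq c) := by
    intro c
    exact dichotomyFL (x c) (xb c) (fun f => dist (cl c) (fa f)) o (hx c) (hxb c)
      (fun f => dist_nonneg) ho (hfeas c) (g c) (hgspec c)
  set A : Finset C := univ.filter (fun c => P c) with hAdef
  have hmemA : ∀ c, c ∈ A ↔ P c := by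
    intro c
    rw [hAdef, mem_filter]
    simp
  have hrex : ∀ c : C, ∃ rr : ℝ, P c → (0 ≤ rr ∧
      1/4 ≤ ∑ f ∈ univ.filter (fun f => dist (cl c) (fa f) ≤ rr), x c f ∧
      3 * rr ≤ Kq c) := by
    intro c
    by_cases h : P c
    · rw [hPdef] at h
      obtain ⟨r0, h1, h2, h3⟩ := h
      exact ⟨r0, fun _ => ⟨h1, h2, h3⟩⟩
    · exact ⟨0, fun hc => absurd hc h⟩
  choose rad hrad using hrex
  set ball : C → Finset F := fun c =>
    univ.filter (fun f => dist (cl c) (fa f) ≤ rad c) with hballdef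
  have hballmass : ∀ c ∈ A, 1/4 ≤ ∑ f ∈ ball c, x c f := by
    intro c hc
    exact (hrad c ((hmemA c).1 hc)).2.1
  have hballne : ∀ c ∈ A, (ball c).Nonempty := by
    intro c hc
    by_contra hemp
    rw [not_nonempty_iff_eq_empty] at hemp
    have h2 := hballmass c hc
    rw [hemp, Finset.sum_empty] at h2
    linarith
  obtain ⟨S, τ, hSA, hτ, hdisj⟩ := clusterFL rad ball A hballne
  have hbfex : ∀ s : C, ∃ fb : F, s ∈ A → (fb ∈ ball s ∧ ∀ f ∈ ball s, o fb ≤ o f) := by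
    intro s
    by_cases h : s ∈ A
    · obtain ⟨fb, hfb, hmin⟩ := Finset.exists_min_image (ball s) o (hballne s h)
      exact ⟨fb, fun _ => ⟨hfb, hmin⟩⟩
    · exact ⟨Classical.arbitrary F, fun h' => absurd h' h⟩
  choose bf hbf using hbfex
  set z : C → F → ℝ := fun c f => if c ∈ A ∧ f = bf (τ c) then 1 else 0 with hz
  set zb : C → F → ℝ := fun c f => if c ∉ A ∧ f = g c then 1 else 0 with hzb
  have hyf : ∀ (cc : C) f, x cc f ≤ univ.sup' univ_nonempty (fun c => x c f) :=
    fun cc f => le_sup' (fun c => x c f) (mem_univ cc)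
  have hy0 : ∀ f, (0:ℝ) ≤ univ.sup' univ_nonempty (fun c => x c f) :=
    fun f => le_trans (hx (Classical.arbitrary C) f) (hyf _ f)
  refine ⟨z, zb, ?_, ?_, ?_, ?_⟩
  · intro c f
    by_cases h : (c ∈ A ∧ f = bf (τ c)) <;> simp [hz, h]
  · intro c f
    by_cases h : (c ∉ A ∧ f = g c) <;> simp [hzb, h]
  · intro c
    by_cases hc : c ∈ A
    · have h1 : ∑ f, z c f = 1 := by simp [hz, hc]
      have h2 : ∑ f, zb c f = 0 := by simp [hzb, hc]
      rw [sum_add_distrib, h1, h2]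
      norm_num
    · have h1 : ∑ f, z c f = 0 := by simp [hz, hc]
      have h2 : ∑ f, zb c f = 1 := by simp [hzb, hc]
      rw [sum_add_distrib, h1, h2]
      norm_num
  · -- cost bound
    -- opening cost of bought facilities
    have hT1 : ∑ f, o f * univ.sup' univ_nonempty (fun c => z c f)
        ≤ 4 * ∑ f, o f * univ.sup' univ_nonempty (fun c => x c f) := by
      have hind : ∀ f, univ.sup' univ_nonempty (fun c => z c f)
          ≤ (if f ∈ S.image bf then (1:ℝ) else 0) := by
        intro f
        refine Finset.sup'_le _ _ fun c _ => ?_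
        by_cases h : (c ∈ A ∧ f = bf (τ c))
        · have hmem : f ∈ S.image bf :=
            Finset.mem_image.2 ⟨τ c, (hτ c h.1).1, h.2.symm⟩
          rw [if_pos hmem]
          simp [hz, h]
        · simp only [hz, if_neg h]
          split <;> norm_num
      have step1 : ∑ f, o f * univ.sup' univ_nonempty (fun c => z c f)
          ≤ ∑ f ∈ S.image bf, o f := by
        calc ∑ f, o f * univ.sup' univ_nonempty (fun c => z c f)
            ≤ ∑ f, o f * (if f ∈ S.image bf then (1:ℝ) else 0) :=
              sum_le_sum fun f _ => mul_le_mul_of_nonneg_left (hind f) (ho f)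
          _ = ∑ f, (if f ∈ S.image bf then o f else 0) := by
              refine sum_congr rfl fun f _ => ?_
              split <;> ring
          _ = ∑ f ∈ univ ∩ S.image bf, o f := Finset.sum_ite_mem _ _ _
          _ = ∑ f ∈ S.image bf, o f := by rw [univ_inter]
      have step2 : ∑ f ∈ S.image bf, o f ≤ ∑ s ∈ S, o (bf s) :=
        sum_image_le_real S bf o ho
      have step3 : ∀ s ∈ S, o (bf s)
          ≤ 4 * ∑ f ∈ ball s, o f * univ.sup' univ_nonempty (fun c => x c f) := by
        intro s hs
        have hsA : s ∈ A := hSA hs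
        obtain ⟨hbfm, hbfmin⟩ := hbf s hsA
        have hmass' : 1/4 ≤ ∑ f ∈ ball s, x s f := hballmass s hsA
        have h1 : o (bf s) * (1/4) ≤ o (bf s) * ∑ f ∈ ball s, x s f :=
          mul_le_mul_of_nonneg_left hmass' (ho _)
        have h2 : o (bf s) * ∑ f ∈ ball s, x s f = ∑ f ∈ ball s, o (bf s) * x s f :=
          mul_sum _ _ _
        have h3 : ∑ f ∈ ball s, o (bf s) * x s f ≤ ∑ f ∈ ball s, o f * x s f :=
          sum_le_sum fun f hf => mul_le_mul_of_nonneg_right (hbfmin f hf) (hx s f)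
        have h4 : ∑ f ∈ ball s, o f * x s f
            ≤ ∑ f ∈ ball s, o f * univ.sup' univ_nonempty (fun c => x c f) :=
          sum_le_sum fun f _ => mul_le_mul_of_nonneg_left (hyf s f) (ho f)
        linarith
      have step4 : ∑ s ∈ S, (4 * ∑ f ∈ ball s, o f * univ.sup' univ_nonempty (fun c => x c f))
          ≤ 4 * ∑ f, o f * univ.sup' univ_nonempty (fun c => x c f) := by
        rw [← mul_sum]
        have huni : ∑ s ∈ S, ∑ f ∈ ball s, o f * univ.sup' univ_nonempty (fun c => x c f)
            = ∑ f ∈ S.biUnion ball, o f * univ.sup' univ_nonempty (fun c => x c f) :=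
          (sum_biUnion hdisj).symm
        rw [huni]
        have : ∑ f ∈ S.biUnion ball, o f * univ.sup' univ_nonempty (fun c => x c f)
            ≤ ∑ f, o f * univ.sup' univ_nonempty (fun c => x c f) :=
          sum_le_sum_of_subset_of_nonneg (subset_univ _)
            (fun f _ _ => mul_nonneg (ho f) (hy0 f))
        linarith
      have step5 : ∑ s ∈ S, o (bf s)
          ≤ ∑ s ∈ S, (4 * ∑ f ∈ ball s, o f * univ.sup' univ_nonempty (fun c => x c f)) :=
        sum_le_sum step3
      linarith
    -- rent opening cost
    have hT2 : ∑ f, o f * ∑ c, p c * zb c f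
        = ∑ c, (if c ∈ A then 0 else p c * o (g c)) := by
      calc ∑ f, o f * ∑ c, p c * zb c f
          = ∑ f, ∑ c, o f * (p c * zb c f) := sum_congr rfl fun f _ => mul_sum _ _ _
        _ = ∑ c, ∑ f, o f * (p c * zb c f) := sum_comm
        _ = ∑ c, (if c ∈ A then 0 else p c * o (g c)) := by
            refine sum_congr rfl fun c _ => ?_
            by_cases hc : c ∈ A
            · simp [hzb, hc]
            · simp [hzb, hc, mul_ite]
              ring
    -- connection costs
    have hT3 : ∑ c, ∑ f, p c * dist (cl c) (fa f) * (z c f + zb c f)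
        = ∑ c, (if c ∈ A then p c * dist (cl c) (fa (bf (τ c)))
            else p c * dist (cl c) (fa (g c))) := by
      refine sum_congr rfl fun c _ => ?_
      by_cases hc : c ∈ A
      · simp [hz, hzb, hc, mul_ite]
      · simp [hz, hzb, hc, mul_ite]
    -- per-client bound
    have hbound : ∀ c : C,
        (if c ∈ A then p c * dist (cl c) (fa (bf (τ c))) else p c * dist (cl c) (fa (g c)))
        + (if c ∈ A then 0 else p c * o (g c)) ≤ p c * Kq c := by
      intro c
      by_cases hc : c ∈ A
      · simp only [if_pos hc, add_zero]
        obtain ⟨hτS, hτr, hτint⟩ := hτ c hc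
        obtain ⟨g0, hg0⟩ := hτint
        rw [mem_inter] at hg0
        have hτA : τ c ∈ A := hSA hτS
        have hg0t : dist (cl (τ c)) (fa g0) ≤ rad (τ c) := by
          have h := hg0.1
          rw [hballdef, mem_filter] at h
          exact h.2
        have hg0c : dist (cl c) (fa g0) ≤ rad c := by
          have h := hg0.2
          rw [hballdef, mem_filter] at h
          exact h.2
        have hbft : dist (cl (τ c)) (fa (bf (τ c))) ≤ rad (τ c) := by
          have h := (hbf (τ c) hτA).1
          rw [hballdef, mem_filter] at h
          exact h.2
        have htri : dist (cl c) (fa (bf (τ c))) ≤ 3 * rad c := by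
          have t1 : dist (cl c) (fa (bf (τ c)))
              ≤ dist (cl c) (fa g0) + dist (fa g0) (fa (bf (τ c))) := dist_triangle _ _ _
          have t2 : dist (fa g0) (fa (bf (τ c)))
              ≤ dist (fa g0) (cl (τ c)) + dist (cl (τ c)) (fa (bf (τ c))) := dist_triangle _ _ _
          have t3 : dist (fa g0) (cl (τ c)) = dist (cl (τ c)) (fa g0) := dist_comm _ _
          linarith
        have h3r : 3 * rad c ≤ Kq c := (hrad c ((hmemA c).1 hc)).2.2
        exact mul_le_mul_of_nonneg_left (htri.trans h3r) (hp0 c)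
      · simp only [if_neg hc]
        have hQ : o (g c) + dist (cl c) (fa (g c)) ≤ Kq c :=
          (hdich c).resolve_left (fun h => hc ((hmemA c).2 h))
        have h1 := mul_le_mul_of_nonneg_left hQ (hp0 c)
        calc p c * dist (cl c) (fa (g c)) + p c * o (g c)
            = p c * (o (g c) + dist (cl c) (fa (g c))) := by ring
          _ ≤ p c * Kq c := h1
    have hcomb : ∑ c, (if c ∈ A then p c * dist (cl c) (fa (bf (τ c)))
            else p c * dist (cl c) (fa (g c)))
        + ∑ c, (if c ∈ A then 0 else p c * o (g c)) ≤ ∑ c, p c * Kq c := by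
      rw [← sum_add_distrib]
      exact sum_le_sum fun c _ => hbound c
    -- Kq sum vs LP terms
    have hKsum : ∑ c, p c * Kq c
        ≤ 4 * (∑ f, o f * ∑ c, p c * xb c f
            + ∑ c, ∑ f, p c * dist (cl c) (fa f) * (x c f + xb c f)) := by
      have e2 : ∀ c : C, p c * Kq c
          ≤ 4 * (p c * ∑ f, dist (cl c) (fa f) * x c f)
            + 4 * (p c * ∑ f, (o f + dist (cl c) (fa f)) * xb c f) := by
        intro c
        have hnn : 0 ≤ p c * ∑ f, (o f + dist (cl c) (fa f)) * xb c f :=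
          mul_nonneg (hp0 c) (sum_nonneg fun f _ =>
            mul_nonneg (add_nonneg (ho f) dist_nonneg) (hxb c f))
        have hnn2 : 0 ≤ p c * ∑ f, dist (cl c) (fa f) * x c f :=
          mul_nonneg (hp0 c) (sum_nonneg fun f _ => mul_nonneg dist_nonneg (hx c f))
        rw [hKqdef]
        nlinarith [hnn, hnn2]
      have e3 : ∑ c, (4 * (p c * ∑ f, dist (cl c) (fa f) * x c f)
            + 4 * (p c * ∑ f, (o f + dist (cl c) (fa f)) * xb c f))
          = 4 * (∑ f, o f * ∑ c, p c * xb c f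
            + ∑ c, ∑ f, p c * dist (cl c) (fa f) * (x c f + xb c f)) := by
        have swap : ∑ f, o f * ∑ c, p c * xb c f
            = ∑ c, ∑ f, o f * (p c * xb c f) := by
          calc ∑ f, o f * ∑ c, p c * xb c f
              = ∑ f, ∑ c, o f * (p c * xb c f) := sum_congr rfl fun f _ => mul_sum _ _ _
            _ = ∑ c, ∑ f, o f * (p c * xb c f) := sum_comm
        rw [swap]
        simp only [Finset.mul_sum, mul_add, ← Finset.sum_add_distrib]
        refine sum_congr rfl fun c _ => sum_congr rfl fun f _ => by ring
      calc ∑ c, p c * Kq c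
          ≤ ∑ c, (4 * (p c * ∑ f, dist (cl c) (fa f) * x c f)
            + 4 * (p c * ∑ f, (o f + dist (cl c) (fa f)) * xb c f)) :=
            sum_le_sum fun c _ => e2 c
        _ = _ := e3
    rw [hT2, hT3]
    linarith
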